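/- Let I be a real interval centered at 0 (i.e., −x ∈ I whenever x ∈ I) and let f : Iⁿ → ℝ be a symmetric quasi-Lovász extension, f = Ľ ∘ φ. Then for every x ∈ I and every A ⊆ [n], f_0(x·1_A) = φ(x)·Ľ_0(1_A), where f_0 = f − f(0,…,0) and Ľ_0 = Ľ − Ľ(0,…,0). -/

import Mathlib

open Finset

/-- The indicator tuple `1_A` of a subset `A ⊆ [n]`. -/
def ind {n : ℕ} (A : Finset (Fin n)) : Fin n → ℝ := fun i => if i ∈ A then 1 else 0

/-- The Möbius transform of a pseudo-Boolean function (viewed as a set function). -/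
def mobius {n : ℕ} (ψ : Finset (Fin n) → ℝ) (A : Finset (Fin n)) : ℝ :=
  ∑ B ∈ A.powerset, (-1 : ℝ) ^ (A.card - B.card) * ψ B

/-- `min_{i ∈ A} x i` (with value `0` for `A = ∅`). -/
def minOnA {n : ℕ} (A : Finset (Fin n)) (x : Fin n → ℝ) : ℝ :=
  if h : A.Nonempty then A.inf' h x else 0

/-- The Lovász extension of a pseudo-Boolean function `ψ` (viewed as a set function):
`L_ψ(x) = a_ψ(∅) + Σ_{∅ ≠ A ⊆ [n]} a_ψ(A) · min_{i ∈ A} x_i`. -/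
def Lov {n : ℕ} (ψ : Finset (Fin n) → ℝ) (x : Fin n → ℝ) : ℝ :=
  mobius ψ ∅ + ∑ A : Finset (Fin n), mobius ψ A * minOnA A x

/-- `x ∈ ℝⁿ_σ`, i.e. `x_{σ(1)} ≤ ⋯ ≤ x_{σ(n)}`. -/
def inRσ {n : ℕ} (σ : Equiv.Perm (Fin n)) (x : Fin n → ℝ) : Prop :=
  ∀ i j : Fin n, i ≤ j → x (σ i) ≤ x (σ j)

/-- `A_σ^↑(k) = {σ(j) : j ≥ k}` (0-indexed; `Aup σ n = ∅`). -/
def Aup {n : ℕ} (σ : Equiv.Perm (Fin n)) (k : ℕ) : Finset (Fin n) :=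
  (Finset.univ.filter fun j : Fin n => k ≤ (j : ℕ)).image σ

/-- `A_σ^↓(k) = {σ(j) : j < k}` (0-indexed; `Adown σ 0 = ∅`). -/
def Adown {n : ℕ} (σ : Equiv.Perm (Fin n)) (k : ℕ) : Finset (Fin n) :=
  (Finset.univ.filter fun j : Fin n => (j : ℕ) < k).image σ

/-- The symmetric Lovász extension of `ψ`: `Lcheck_ψ(x) = ψ(0) + L_ψ(x⁺) − L_ψ(x⁻)`. -/
def SLov {n : ℕ} (ψ : Finset (Fin n) → ℝ) (x : Fin n → ℝ) : ℝ :=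
  ψ ∅ + Lov ψ (fun i => max (x i) 0) - Lov ψ (fun i => max (-(x i)) 0)

lemma minOnA_mul {n : ℕ} (B : Finset (Fin n)) (x : Fin n → ℝ) {c : ℝ} (hc : 0 ≤ c) :
    minOnA B (fun i => c * x i) = c * minOnA B x := by
  unfold minOnA
  split_ifs with h
  · obtain ⟨i, hi, hix⟩ := B.exists_mem_eq_inf' h x
    obtain ⟨j, hj, hjx⟩ := B.exists_mem_eq_inf' h (fun i => c * x i)
    apply le_antisymm
    · rw [hix]; exact Finset.inf'_le (fun i => c * x i) hi
    · rw [hjx]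
      exact mul_le_mul_of_nonneg_left (Finset.inf'_le x hj) hc
  · ring

lemma Lov_mul {n : ℕ} (ψ : Finset (Fin n) → ℝ) (x : Fin n → ℝ) {c : ℝ} (hc : 0 ≤ c) :
    Lov ψ (fun i => c * x i) = mobius ψ ∅ + c * ∑ B : Finset (Fin n), mobius ψ B * minOnA B x := by
  unfold Lov
  rw [Finset.mul_sum]
  congr 1
  apply Finset.sum_congr rfl
  intro B _
  rw [minOnA_mul B x hc]; ring

lemma SLov_mul {n : ℕ} (ψ : Finset (Fin n) → ℝ) (A : Finset (Fin n)) (c : ℝ) :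
    SLov ψ (fun i => c * ind A i) =
      ψ ∅ + c * ∑ B : Finset (Fin n), mobius ψ B * minOnA B (ind A) := by
  unfold SLov
  have hpos : (fun i => max (c * ind A i) 0) = fun i => max c 0 * ind A i := by
    funext i; unfold ind; split_ifs <;> simp
  have hneg : (fun i => max (-(c * ind A i)) 0) = fun i => max (-c) 0 * ind A i := by
    funext i; unfold ind; split_ifs <;> simp
  rw [hpos, hneg, Lov_mul ψ _ (le_max_right c 0), Lov_mul ψ _ (le_max_right (-c) 0)]
  have : max c 0 - max (-c) 0 = c := max_zero_sub_max_neg_zero_eq_self c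
  linear_combination (∑ B : Finset (Fin n), mobius ψ B * minOnA B (ind A)) * this

/-- For a symmetric quasi-Lovász extension `f = Lcheck ∘ φ` on `Iⁿ`, with `I` an
interval centered at `0`, one has `f_0(x·1_A) = φ(x)·Lcheck_0(1_A)` for all `x ∈ I`, `A ⊆ [n]`. -/
theorem stmt7 {n : ℕ} (I : Set ℝ) (hI : I.OrdConnected) (h0 : (0 : ℝ) ∈ I)
    (hsym : ∀ x ∈ I, -x ∈ I)
    (f Lcheck : (Fin n → ℝ) → ℝ) (φ : ℝ → ℝ)
    (hL : ∃ ψ : Finset (Fin n) → ℝ, Lcheck = SLov ψ)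
    (hφ : MonotoneOn φ I) (hφodd : ∀ x ∈ I, φ (-x) = -(φ x))
    (hf : ∀ x : Fin n → ℝ, (∀ i, x i ∈ I) → f x = Lcheck (fun i => φ (x i))) :
    ∀ x ∈ I, ∀ A : Finset (Fin n),
      f (fun i => x * ind A i) - f (fun _ => 0) = φ x * (Lcheck (ind A) - Lcheck (fun _ => 0)) := by
  obtain ⟨ψ, rfl⟩ := hL
  have hφ0 : φ 0 = 0 := by
    have h := hφodd 0 h0
    simp only [neg_zero] at h
    linarith
  intro x hx A
  have hmem : ∀ i, x * ind A i ∈ I := by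
    intro i; unfold ind; split_ifs <;> simpa
  rw [hf _ hmem, hf _ (fun _ => h0)]
  have h1 : (fun i => φ (x * ind A i)) = fun i => φ x * ind A i := by
    funext i; unfold ind; split_ifs <;> simp [hφ0]
  have h2 : (fun _ : Fin n => φ (0 : ℝ)) = fun i => (0 : ℝ) * ind A i := by
    funext i; simp [hφ0]
  have h3 : ind A = fun i => (1 : ℝ) * ind A i := by funext i; ring
  have h4 : (fun _ : Fin n => (0 : ℝ)) = fun i => (0 : ℝ) * ind A i := by
    funext i; ring
  have e1 : SLov ψ (ind A) =
      ψ ∅ + ∑ B : Finset (Fin n), mobius ψ B * minOnA B (ind A) := by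
    rw [h3, SLov_mul]
    simp only [one_mul]
  rw [h1, h2, h4, SLov_mul, SLov_mul, e1]
  ring
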